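/- Let i, j, n be positive integers with 0 < i < F_n ≤ j. Then S_{j,i} = 0; i.e., from any state j ≥ F_n the chain cannot jump to any state i with 0 < i < F_n. -/
import Mathlib


/-- Fibonacci sequence with `F 0 = 1`, `F 1 = 2`, `F (n+2) = F (n+1) + F n`. -/
def fibF : ℕ → ℕ
  | 0 => 1
  | 1 => 2
  | (n+2) => fibF (n+1) + fibF n

lemma fibF_pos : ∀ n, 0 < fibF n
  | 0 => by simp [fibF]
  | 1 => by simp [fibF]
  | (n+2) => by
      have h1 := fibF_pos (n+1)
      simp only [fibF]
      omega

/-- Zeckendorf digits of `N` in the base `fibF`: `N = ∑ i, zeck N i * fibF i`,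
with `zeck N i ∈ {0,1}` and no two consecutive `1`'s. -/
def zeck (N i : ℕ) : ℕ :=
  if h : N = 0 then 0
  else if i = Nat.findGreatest (fun j => fibF j ≤ N) N then 1
  else zeck (N - fibF (Nat.findGreatest (fun j => fibF j ≤ N) N)) i
termination_by N
decreasing_by
  exact Nat.sub_lt (Nat.pos_of_ne_zero h) (fibF_pos _)

lemma zeck_eq_zero_of_lt : ∀ N, ∀ i, N < i → zeck N i = 0 := by
  intro N
  induction N using Nat.strong_induction_on with
  | _ N ih =>
    intro i hi
    rw [zeck]
    split
    · rfl
    · rename_i h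
      have hkN : Nat.findGreatest (fun j => fibF j ≤ N) N ≤ N := Nat.findGreatest_le N
      rw [if_neg (by omega)]
      exact ih _ (Nat.sub_lt (Nat.pos_of_ne_zero h) (fibF_pos _)) i
        (lt_of_le_of_lt (Nat.sub_le _ _) hi)

lemma exists_break0 (N : ℕ) : ∃ i, ¬(zeck N (2*i+1) = 1 ∧ zeck N (2*i) = 0) := by
  refine ⟨N + 1, ?_⟩
  have h : zeck N (2*(N+1)+1) = 0 := zeck_eq_zero_of_lt N _ (by omega)
  simp [h]

lemma exists_break1 (N : ℕ) : ∃ i, ¬(zeck N (2*i+2) = 1 ∧ zeck N (2*i+1) = 0) := by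
  refine ⟨N + 1, ?_⟩
  have h : zeck N (2*(N+1)+2) = 0 := zeck_eq_zero_of_lt N _ (by omega)
  simp [h]

lemma fibF_lt_succ (n : ℕ) : fibF n < fibF (n+1) := by
  cases n with
  | zero => simp [fibF]
  | succ k =>
    have := fibF_pos k
    simp only [fibF]
    omega

lemma fibF_mono : Monotone fibF :=
  monotone_nat_of_le_succ fun n => (fibF_lt_succ n).le

lemma lt_fibF (n : ℕ) : n < fibF n := by
  induction n with
  | zero => simp [fibF]
  | succ k ih => have := fibF_lt_succ k; omega

lemma fibF_gN_le {N : ℕ} (h : N ≠ 0) :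
    fibF (Nat.findGreatest (fun j => fibF j ≤ N) N) ≤ N :=
  Nat.findGreatest_spec (P := fun j => fibF j ≤ N) (m := 0) (Nat.zero_le N)
    (show fibF 0 ≤ N by simpa [fibF] using Nat.one_le_iff_ne_zero.2 h)

lemma le_gN {N n : ℕ} (h : fibF n ≤ N) :
    n ≤ Nat.findGreatest (fun j => fibF j ≤ N) N :=
  Nat.le_findGreatest (le_of_lt (lt_of_lt_of_le (lt_fibF n) h)) h

lemma lt_fibF_gN_succ {N : ℕ} (h : N ≠ 0) :
    N < fibF (Nat.findGreatest (fun j => fibF j ≤ N) N + 1) := by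
  by_contra hc
  push_neg at hc
  have := le_gN hc
  omega

lemma zeck_top {N : ℕ} (h : N ≠ 0) :
    zeck N (Nat.findGreatest (fun j => fibF j ≤ N) N) = 1 := by
  rw [zeck]; simp [h]

lemma zeck_rec {N i : ℕ} (h : N ≠ 0)
    (hi : i ≠ Nat.findGreatest (fun j => fibF j ≤ N) N) :
    zeck N i = zeck (N - fibF (Nat.findGreatest (fun j => fibF j ≤ N) N)) i := by
  rw [zeck]; simp [h, hi]
lemma zeck_zero (i : ℕ) : zeck 0 i = 0 := by rw [zeck]; simp

lemma zeck_eq_zero_of_gN_lt : ∀ N i, Nat.findGreatest (fun j => fibF j ≤ N) N < i →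
    zeck N i = 0 := by
  intro N
  induction N using Nat.strong_induction_on with
  | _ N ih =>
    intro i hi
    by_cases hN : N = 0
    · subst hN; exact zeck_zero i
    · rw [zeck_rec hN (by omega)]
      set N' := N - fibF (Nat.findGreatest (fun j => fibF j ≤ N) N) with hN'
      have hlt : N' < N := Nat.sub_lt (Nat.pos_of_ne_zero hN) (fibF_pos _)
      by_cases hN'0 : N' = 0
      · rw [hN'0]; exact zeck_zero i
      · apply ih N' hlt
        have h1 : fibF (Nat.findGreatest (fun j => fibF j ≤ N') N') ≤ N' := fibF_gN_le hN'0
        have h2 : fibF (Nat.findGreatest (fun j => fibF j ≤ N') N') ≤ N :=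
          le_trans h1 (Nat.sub_le _ _)
        have := le_gN h2
        omega

lemma zeck_one_le {N i : ℕ} (h : zeck N i = 1) :
    i ≤ Nat.findGreatest (fun j => fibF j ≤ N) N := by
  by_contra hc
  push_neg at hc
  rw [zeck_eq_zero_of_gN_lt N i hc] at h
  exact absurd h (by omega)

lemma zeck_le_one : ∀ N i, zeck N i ≤ 1 := by
  intro N
  induction N using Nat.strong_induction_on with
  | _ N ih =>
    intro i
    rw [zeck]
    split
    · omega
    · split
      · omega
      · rename_i h _
        exact ih _ (Nat.sub_lt (Nat.pos_of_ne_zero h) (fibF_pos _)) i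
lemma main0 : ∀ N m, (∀ k, k < m → zeck N (2*k+1) = 1) →
    fibF (2*m) ≤ N + 1 ∧ (N + 1 = fibF (2*m) ∨
      fibF (2*m) + fibF (Nat.findGreatest (fun j => fibF j ≤ N) N) ≤ N + 1) := by
  intro N
  induction N using Nat.strong_induction_on with
  | _ N ih =>
    intro m hm
    by_cases hN : N = 0
    · subst hN
      have hm0 : m = 0 := by
        by_contra hc
        have := hm 0 (by omega)
        rw [zeck_zero] at this
        omega
      subst hm0
      refine ⟨by simp [fibF], Or.inl (by simp [fibF])⟩
    · set t := Nat.findGreatest (fun j => fibF j ≤ N) N with ht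
      have ht1 : fibF t ≤ N := fibF_gN_le hN
      have ht2 : N < fibF (t + 1) := lt_fibF_gN_succ hN
      cases m with
      | zero =>
        have h0 : fibF (2*0) = 1 := rfl
        exact ⟨by omega, Or.inr (by omega)⟩
      | succ m' =>
        have h1 : 2*m'+1 ≤ t := zeck_one_le (hm m' (by omega))
        set N' := N - fibF t with hN'
        have hltN : N' < N := Nat.sub_lt (Nat.pos_of_ne_zero hN) (fibF_pos _)
        have hNsum : N = N' + fibF t := by omega
        by_cases htm : 2*(m'+1) ≤ t
        · have hpat : ∀ k, k < m'+1 → zeck N' (2*k+1) = 1 := by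
            intro k hk
            have := hm k hk
            rwa [zeck_rec hN (by omega)] at this
          obtain ⟨A, _⟩ := ih N' hltN (m'+1) hpat
          exact ⟨by omega, Or.inr (by omega)⟩
        · have hteq : t = 2*m'+1 := by omega
          have hpat : ∀ k, k < m' → zeck N' (2*k+1) = 1 := by
            intro k hk
            have := hm k (by omega)
            rwa [zeck_rec hN (by omega)] at this
          obtain ⟨A, B⟩ := ih N' hltN m' hpat
          have hft : fibF t = fibF (2*m'+1) := by rw [hteq]
          have hfib : fibF (2*m'+1+1) = fibF (2*m'+1) + fibF (2*m') := rfl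
          have ht2' : N < fibF (2*m'+1) + fibF (2*m') := by
            rw [hteq] at ht2; omega
          have hsm : N' + 1 ≤ fibF (2*m') := by omega
          have hA : N' + 1 = fibF (2*m') := by
            rcases B with B | B
            · exact B
            · have := fibF_pos (Nat.findGreatest (fun j => fibF j ≤ N') N')
              omega
          have h2m : fibF (2*(m'+1)) = fibF (2*m'+1) + fibF (2*m') := by
            have e : 2*(m'+1) = 2*m'+1+1 := by ring
            rw [e, hfib]
          exact ⟨by omega, Or.inl (by omega)⟩
lemma main1 : ∀ N m, zeck N 0 = 1 → (∀ k, k < m → zeck N (2*k+2) = 1) →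
    fibF (2*m+1) ≤ N + 1 ∧ (N + 1 = fibF (2*m+1) ∨
      fibF (2*m+1) + fibF (Nat.findGreatest (fun j => fibF j ≤ N) N) ≤ N + 1) := by
  intro N
  induction N using Nat.strong_induction_on with
  | _ N ih =>
    intro m h0 hm
    have hN : N ≠ 0 := by
      intro hc; subst hc; rw [zeck_zero] at h0; omega
    set t := Nat.findGreatest (fun j => fibF j ≤ N) N with ht
    have ht1 : fibF t ≤ N := fibF_gN_le hN
    have ht2 : N < fibF (t + 1) := lt_fibF_gN_succ hN
    set N' := N - fibF t with hN'
    have hltN : N' < N := Nat.sub_lt (Nat.pos_of_ne_zero hN) (fibF_pos _)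
    have hNsum : N = N' + fibF t := by omega
    by_cases htm : 2*m+1 ≤ t
    · -- recurse with same m
      have h0' : zeck N' 0 = 1 := by
        have := h0
        rwa [zeck_rec hN (by omega)] at this
      have hpat : ∀ k, k < m → zeck N' (2*k+2) = 1 := by
        intro k hk
        have := hm k hk
        rwa [zeck_rec hN (by omega)] at this
      obtain ⟨A, _⟩ := ih N' hltN m h0' hpat
      exact ⟨by omega, Or.inr (by omega)⟩
    · -- t ≤ 2*m
      cases m with
      | zero =>
        -- t = 0, so N < fibF 1 = 2, N = 1
        have ht0 : t = 0 := by omega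
        have hf0 : fibF 0 = 1 := rfl
        have hf1 : fibF (0+1) = 2 := rfl
        have hf1' : fibF (2*0+1) = 2 := rfl
        rw [ht0] at ht2 ht1
        have hN1 : N = 1 := by omega
        rw [ht0]
        exact ⟨by omega, Or.inl (by omega)⟩
      | succ m' =>
        have h1 : 2*m'+2 ≤ t := zeck_one_le (hm m' (by omega))
        have hteq : t = 2*m'+2 := by omega
        have h0' : zeck N' 0 = 1 := by
          have := h0
          rwa [zeck_rec hN (by omega)] at this
        have hpat : ∀ k, k < m' → zeck N' (2*k+2) = 1 := by
          intro k hk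
          have := hm k (by omega)
          rwa [zeck_rec hN (by omega)] at this
        obtain ⟨A, B⟩ := ih N' hltN m' h0' hpat
        have hft : fibF t = fibF (2*m'+2) := by rw [hteq]
        have hfib : fibF (2*m'+1+1) = fibF (2*m'+1) + fibF (2*m') := rfl
        have hfib2 : fibF (2*m'+2+1) = fibF (2*m'+2) + fibF (2*m'+1) := rfl
        have ht2' : N < fibF (2*m'+2) + fibF (2*m'+1) := by
          rw [hteq] at ht2
          have e : 2*m'+2+1 = 2*m'+3 := rfl
          omega
        have hA : N' + 1 = fibF (2*m'+1) := by
          rcases B with B | B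
          · exact B
          · have := fibF_pos (Nat.findGreatest (fun j => fibF j ≤ N') N')
            omega
        have h2m : fibF (2*(m'+1)+1) = fibF (2*m'+2) + fibF (2*m'+1) := by
          have e : 2*(m'+1)+1 = 2*m'+2+1 := by ring
          rw [e, hfib2]
        exact ⟨by omega, Or.inl (by omega)⟩
/-- The number `s` of `10`-blocks carried in the stochastic Fibonacci adding machine:
if the digits of `N` end with `00(10)^s` (case `ε₀ = 0`) or with `00(10)^s1`
(case `ε₀ = 1`), this returns `s`. -/
def carryLen (N : ℕ) : ℕ :=
  if zeck N 0 = 0 then Nat.find (exists_break0 N) else Nat.find (exists_break1 N)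

/-- `Pprod p t = p 1 * p 2 * ⋯ * p t`. -/
def Pprod (p : ℕ → ℝ) (t : ℕ) : ℝ := ∏ i ∈ Finset.Icc 1 t, p i

/-- The transition matrix `S` of the Fibonacci stochastic adding machine associated to
the probability sequence `p`:  `S N N = 1 - p 1`;  if the digits of `N` end with
`00(10)^s` then `S N (N+1) = p 1 ⋯ p (s+1)` and `S N (N+1-F (2m)) = p 1 ⋯ p m * (1 - p (m+1))`
for `1 ≤ m ≤ s`;  if the digits of `N` end with `00(10)^s1` then
`S N (N+1) = p 1 ⋯ p (s+2)` and `S N (N+1-F (2m-1)) = p 1 ⋯ p m * (1 - p (m+1))` for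
`1 ≤ m ≤ s+1`;  all other entries vanish. -/
noncomputable def Smat (p : ℕ → ℝ) (N M : ℕ) : ℝ :=
  (if M = N then 1 - p 1 else 0) +
  if zeck N 0 = 0 then
    (if M = N + 1 then Pprod p (carryLen N + 1) else 0) +
    ∑ m ∈ Finset.Icc 1 (carryLen N),
      (if M = N + 1 - fibF (2*m) then Pprod p m * (1 - p (m+1)) else 0)
  else
    (if M = N + 1 then Pprod p (carryLen N + 2) else 0) +
    ∑ m ∈ Finset.Icc 1 (carryLen N + 1),
      (if M = N + 1 - fibF (2*m - 1) then Pprod p m * (1 - p (m+1)) else 0)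
/-- Let `i, j, n` be positive integers with `0 < i < F n ≤ j`.
Then `S j i = 0`: from any state `j ≥ F n` the chain cannot jump to any state `i` with
`0 < i < F n`. -/
theorem stmt2 (p : ℕ → ℝ) (hp : ∀ i, 1 ≤ i → 0 < p i ∧ p i ≤ 1)
    (i j n : ℕ) (hipos : 0 < i) (hnpos : 0 < n)
    (h1 : i < fibF n) (h2 : fibF n ≤ j) :
    Smat p j i = 0 := by
  have hij : i < j := lt_of_lt_of_le h1 h2
  have hgn : n ≤ Nat.findGreatest (fun k => fibF k ≤ j) j := le_gN h2
  have hfg : fibF n ≤ fibF (Nat.findGreatest (fun k => fibF k ≤ j) j) := fibF_mono hgn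
  simp only [Smat]
  rw [if_neg (by omega : ¬ i = j)]
  by_cases h0 : zeck j 0 = 0
  · rw [if_pos h0, if_neg (by omega : ¬ i = j + 1)]
    have hcl : carryLen j = Nat.find (exists_break0 j) := by
      rw [carryLen, if_pos h0]
    have hsum : ∑ m ∈ Finset.Icc 1 (carryLen j),
        (if i = j + 1 - fibF (2*m) then Pprod p m * (1 - p (m+1)) else 0) = 0 := by
      apply Finset.sum_eq_zero
      intro m hmmem
      rw [Finset.mem_Icc] at hmmem
      have hne : ¬ (i = j + 1 - fibF (2*m)) := by
        intro hi
        have hpat : ∀ k, k < m → zeck j (2*k+1) = 1 := by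
          intro k hk
          have hk2 : k < Nat.find (exists_break0 j) := by omega
          have hmin := Nat.find_min (exists_break0 j) hk2
          rw [not_not] at hmin
          exact hmin.1
        obtain ⟨A, B⟩ := main0 j m hpat
        rcases B with B | B <;> omega
      rw [if_neg hne]
    rw [hsum]
    ring
  · rw [if_neg h0, if_neg (by omega : ¬ i = j + 1)]
    have hcl : carryLen j = Nat.find (exists_break1 j) := by
      rw [carryLen, if_neg h0]
    have h01 : zeck j 0 = 1 := by have := zeck_le_one j 0; omega
    have hsum : ∑ m ∈ Finset.Icc 1 (carryLen j + 1),
        (if i = j + 1 - fibF (2*m - 1) then Pprod p m * (1 - p (m+1)) else 0) = 0 := by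
      apply Finset.sum_eq_zero
      intro m hmmem
      rw [Finset.mem_Icc] at hmmem
      have hne : ¬ (i = j + 1 - fibF (2*m - 1)) := by
        intro hi
        obtain ⟨m', rfl⟩ : ∃ m', m = m' + 1 := ⟨m - 1, by omega⟩
        have hpat : ∀ k, k < m' → zeck j (2*k+2) = 1 := by
          intro k hk
          have hk2 : k < Nat.find (exists_break1 j) := by omega
          have hmin := Nat.find_min (exists_break1 j) hk2
          rw [not_not] at hmin
          exact hmin.1
        obtain ⟨A, B⟩ := main1 j m' h01 hpat
        have he : 2*(m'+1) - 1 = 2*m'+1 := by omega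
        rw [he] at hi
        rcases B with B | B <;> omega
      rw [if_neg hne]
    rw [hsum]
    ring
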